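/- arXiv:1205.2841 — 2 statements merged into one kernel-verified Lean document; each statement's English description precedes it below -/
import Mathlib

section
/- A hedge automaton A = (Q, Σ, Q_f, Δ) is universal if and only if for every macrostate P ∈ MinPost*(∅) we have P ∩ Q_f ≠ ∅. -/
/-- Unranked trees over alphabet `σ`: a root label and a list of subtrees. -/
inductive UTree (σ : Type) : Type where
  | node : σ → List (UTree σ) → UTree σ

namespace UTree

/-- Linearization of an unranked tree, over `σ ⊕ σ` where `Sum.inl a` is the
opening tag `a` and `Sum.inr a` is the closing tag `ā`. -/
def lin {σ : Type} : UTree σ → List (σ ⊕ σ)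
  | .node a ts => Sum.inl a :: ((ts.attach.map fun x => lin x.1).flatten ++ [Sum.inr a])
decreasing_by simp only [UTree.node.sizeOf_spec]; have := List.sizeOf_lt_of_mem x.2; omega

/-- Height of a tree (number of nodes on the longest branch). -/
def height {σ : Type} : UTree σ → ℕ
  | .node _ ts => ((ts.attach.map fun x => height x.1).foldr max 0) + 1
decreasing_by simp only [UTree.node.sizeOf_spec]; have := List.sizeOf_lt_of_mem x.2; omega

end UTree

/-- Linearization of a hedge (a finite sequence of trees). -/
def linH {σ : Type} (h : List (UTree σ)) : List (σ ⊕ σ) := (h.map UTree.lin).flatten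

/-- `u` is a nonempty proper prefix of the linearization of some tree. -/
def ProperPrefix {σ : Type} (u : List (σ ⊕ σ)) : Prop :=
  ∃ (t : UTree σ) (v : List (σ ⊕ σ)), v ≠ [] ∧ u ++ v = t.lin

/-- A hedge automaton: final states and rules `(a, L, q)` with a horizontal
language `L ⊆ Q*`. -/
structure HedgeAutomaton (σ Q : Type) where
  final : Set Q
  rules : Set (σ × Set (List Q) × Q)

/-- `HEval A t q` holds iff some run of `A` on `t` labels the root of `t` by `q`. -/
inductive HEval {σ Q : Type} (A : HedgeAutomaton σ Q) : UTree σ → Q → Prop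
  | node {a : σ} {ts : List (UTree σ)} {q : Q} {L : Set (List Q)} {qs : List Q} :
      (a, L, q) ∈ A.rules → qs ∈ L → qs.length = ts.length →
      (∀ p ∈ ts.zip qs, HEval A p.1 p.2) → HEval A (UTree.node a ts) q

/-- A tree is accepted if some run labels its root by a final state. -/
def accepted {σ Q : Type} (A : HedgeAutomaton σ Q) (t : UTree σ) : Prop :=
  ∃ q ∈ A.final, HEval A t q

/-- All horizontal languages of `A` are regular. -/
def RegularHA {σ Q : Type} (A : HedgeAutomaton σ Q) : Prop :=
  ∀ r ∈ A.rules, Language.IsRegular (r.2.1 : Language Q)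

/-- The words `p₁⋯pₙ` of a macrostate word `P₁⋯Pₙ`, with `pᵢ ∈ Pᵢ` for all `i`. -/
def wordsOf {Q : Type} (π : List (Set Q)) : Set (List Q) :=
  {w | List.Forall₂ (· ∈ ·) w π}

/-- `Post_a(π)` for a macrostate word `π`. -/
def postA {σ Q : Type} (A : HedgeAutomaton σ Q) (a : σ) (π : List (Set Q)) : Set Q :=
  {q | ∃ L : Set (List Q), (a, L, q) ∈ A.rules ∧ (L ∩ wordsOf π).Nonempty}

/-- The macrostate `P_t = {q | t →A q}` of a tree `t`. -/
def Pt {σ Q : Type} (A : HedgeAutomaton σ Q) (t : UTree σ) : Set Q := {q | HEval A t q}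

/-- The macrostate word `π_h = P_{t₁}⋯P_{tₙ}` of a hedge `h = t₁⋯tₙ`. -/
def pih {σ Q : Type} (A : HedgeAutomaton σ Q) (h : List (UTree σ)) : List (Set Q) :=
  h.map (Pt A)

/-- `Post(M) = {Post_a(π) | a ∈ Σ, π ∈ M*} ∪ M`. -/
def postSet {σ Q : Type} (A : HedgeAutomaton σ Q) (M : Set (Set Q)) : Set (Set Q) :=
  {P | ∃ (a : σ) (π : List (Set Q)), (∀ x ∈ π, x ∈ M) ∧ P = postA A a π} ∪ M

/-- `⌊S⌋`: the `⊆`-minimal elements of a family of sets. -/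
def mins {α : Type} (S : Set (Set α)) : Set (Set α) :=
  {P ∈ S | ∀ P' ∈ S, P' ⊆ P → P' = P}

/-- `MinPost^i(M)`, with `MinPost^0(M) = ⌊M⌋` and
`MinPost^i(M) = ⌊Post(MinPost^{i-1}(M))⌋`. -/
def minPostIter {σ Q : Type} (A : HedgeAutomaton σ Q) : ℕ → Set (Set Q) → Set (Set Q)
  | 0, M => mins M
  | n + 1, M => mins (postSet A (minPostIter A n M))

/-- `MinPost*(M) = ⋃_{i ≥ 0} MinPost^i(M)`. -/
def minPostStar {σ Q : Type} (A : HedgeAutomaton σ Q) (M : Set (Set Q)) : Set (Set Q) :=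
  ⋃ i : ℕ, minPostIter A i M

/-- `A` is universal: it accepts every tree of `T(Σ)`. -/
def universal {σ Q : Type} (A : HedgeAutomaton σ Q) : Prop :=
  ∀ t : UTree σ, accepted A t

section Aux

open List

variable {σ Q : Type}

lemma words_mono {π π' : List (Set Q)} (h : List.Forall₂ (· ⊆ ·) π π') :
    wordsOf π ⊆ wordsOf π' := by
  intro w hw
  simp only [wordsOf, Set.mem_setOf_eq] at *
  induction h generalizing w with
  | nil => cases hw; exact .nil
  | cons hxy _ ih =>
    cases hw with
    | cons h1 h2 => exact .cons (hxy h1) (ih h2)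

lemma postA_mono (A : HedgeAutomaton σ Q) {a : σ} {π π' : List (Set Q)}
    (h : List.Forall₂ (· ⊆ ·) π π') : postA A a π ⊆ postA A a π' := by
  rintro q ⟨L, hL, w, hwL, hwπ⟩
  exact ⟨L, hL, w, hwL, words_mono h hwπ⟩

lemma forall₂_sub_trans {π₁ π₂ π₃ : List (Set Q)}
    (h1 : List.Forall₂ (· ⊆ ·) π₁ π₂) (h2 : List.Forall₂ (· ⊆ ·) π₂ π₃) :
    List.Forall₂ (· ⊆ ·) π₁ π₃ := by
  induction h1 generalizing π₃ with
  | nil => cases h2; exact .nil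
  | cons hxy _ ih =>
    cases h2 with
    | cons h3 h4 => exact .cons (hxy.trans h3) (ih h4)

lemma Pt_node (A : HedgeAutomaton σ Q) (a : σ) (ts : List (UTree σ)) :
    Pt A (UTree.node a ts) = postA A a (pih A ts) := by
  ext q
  constructor
  · intro hq
    cases hq with
    | node hrule hqsL hlen hall =>
      rename_i L qs
      refine ⟨L, hrule, qs, hqsL, ?_⟩
      show List.Forall₂ (· ∈ ·) qs (ts.map (Pt A))
      rw [List.forall₂_map_right_iff]
      have : List.Forall₂ (flip fun q t => HEval A t q) ts qs := by
        rw [List.forall₂_iff_zip]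
        exact ⟨hlen.symm, fun {a b} hab => hall (a, b) hab⟩
      exact this.flip
  · rintro ⟨L, hrule, qs, hqsL, hqs⟩
    have h2 : List.Forall₂ (fun q t => HEval A t q) qs ts := by
      have := hqs
      rw [show wordsOf (pih A ts) = {w | List.Forall₂ (· ∈ ·) w (ts.map (Pt A))} from rfl] at this
      simpa [List.forall₂_map_right_iff, Pt] using this
    have h3 := h2.flip
    rw [List.forall₂_iff_zip] at h3
    have hlen : qs.length = ts.length := h2.length_eq
    refine HEval.node hrule hqsL hlen ?_
    intro p hp
    exact h3.2 hp

lemma mins_dominate [Fintype Q] (S : Set (Set Q)) (P : Set Q) (hP : P ∈ S) :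
    ∃ P' ∈ mins S, P' ⊆ P := by
  by_cases h : ∀ P'' ∈ S, P'' ⊆ P → P'' = P
  · exact ⟨P, ⟨hP, h⟩, subset_rfl⟩
  · push_neg at h
    obtain ⟨P'', hP''S, hsub, hne⟩ := h
    have hlt : P''.ncard < P.ncard :=
      Set.ncard_lt_ncard (ssubset_of_subset_of_ne hsub hne) P.toFinite
    obtain ⟨P', h1, h2⟩ := mins_dominate S P'' hP''S
    exact ⟨P', h1, h2.trans hsub⟩
termination_by P.ncard
decreasing_by exact hlt

lemma lift_le [Fintype Q] (A : HedgeAutomaton σ Q) {m n : ℕ} (h : m ≤ n) :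
    ∀ P ∈ minPostIter A m (∅ : Set (Set Q)), ∃ P' ∈ minPostIter A n ∅, P' ⊆ P := by
  induction n, h using Nat.le_induction with
  | base => exact fun P hP => ⟨P, hP, subset_rfl⟩
  | succ n _ ih =>
    intro P hP
    obtain ⟨P', hP', hsub⟩ := ih P hP
    obtain ⟨P'', hP'', hsub'⟩ := mins_dominate (postSet A (minPostIter A n ∅)) P' (Or.inr hP')
    exact ⟨P'', hP'', hsub'.trans hsub⟩

lemma lift_list [Fintype Q] (A : HedgeAutomaton σ Q) {m n : ℕ} (h : m ≤ n) :
    ∀ π : List (Set Q), (∀ x ∈ π, x ∈ minPostIter A m (∅ : Set (Set Q))) →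
      ∃ π', (∀ x ∈ π', x ∈ minPostIter A n (∅ : Set (Set Q))) ∧ List.Forall₂ (· ⊆ ·) π' π := by
  intro π
  induction π with
  | nil => exact fun _ => ⟨[], by simp, .nil⟩
  | cons x xs ih =>
    intro hx
    obtain ⟨x', hx', hsubx⟩ := lift_le A h x (hx x (List.mem_cons_self))
    obtain ⟨π', hπ', hf⟩ := ih (fun y hy => hx y (List.mem_cons_of_mem _ hy))
    refine ⟨x' :: π', ?_, .cons hsubx hf⟩
    intro y hy
    rcases List.mem_cons.mp hy with rfl | hy'
    · exact hx'
    · exact hπ' y hy' 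
    
lemma hedge_level [Fintype Q] (A : HedgeAutomaton σ Q) (ts : List (UTree σ))
    (h : ∀ t ∈ ts, ∃ i, ∃ P ∈ minPostIter A i (∅ : Set (Set Q)), P ⊆ Pt A t) :
    ∃ N, ∃ π, (∀ x ∈ π, x ∈ minPostIter A N (∅ : Set (Set Q))) ∧
      List.Forall₂ (· ⊆ ·) π (pih A ts) := by
  induction ts with
  | nil => exact ⟨0, [], by simp, by simp [pih]⟩
  | cons t ts ih =>
    obtain ⟨i, P, hP, hsub⟩ := h t (List.mem_cons_self)
    obtain ⟨N, π, hπ, hf⟩ := ih (fun t' ht' => h t' (List.mem_cons_of_mem _ ht'))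
    obtain ⟨P', hP', hsubP⟩ := lift_le A (le_max_left i N) P hP
    obtain ⟨π', hπ', hf'⟩ := lift_list A (le_max_right i N) π hπ
    refine ⟨max i N, P' :: π', ?_, ?_⟩
    · intro x hx
      rcases List.mem_cons.mp hx with rfl | hx'
      · exact hP'
      · exact hπ' x hx' 
    · exact .cons (hsubP.trans hsub) (forall₂_sub_trans hf' hf)

lemma exists_min [Fintype Q] (A : HedgeAutomaton σ Q) (t : UTree σ) :
    ∃ i, ∃ P ∈ minPostIter A i (∅ : Set (Set Q)), P ⊆ Pt A t := by
  obtain ⟨a, ts⟩ := t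
  obtain ⟨N, π, hπ, hf⟩ := hedge_level A ts (fun t' ht' => exists_min A t')
  have hmem : postA A a π ∈ postSet A (minPostIter A N (∅ : Set (Set Q))) :=
    Or.inl ⟨a, π, hπ, rfl⟩
  obtain ⟨P', hP', hsub⟩ := mins_dominate _ _ hmem
  exact ⟨N + 1, P', hP', hsub.trans ((postA_mono A hf).trans (Pt_node A a ts).symm.subset)⟩
termination_by sizeOf t
decreasing_by
  have := List.sizeOf_lt_of_mem ht'
  simp only [UTree.node.sizeOf_spec]; omega

lemma choose_trees (A : HedgeAutomaton σ Q) (π : List (Set Q))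
    (h : ∀ x ∈ π, ∃ t : UTree σ, Pt A t ⊆ x) :
    ∃ ts : List (UTree σ), List.Forall₂ (fun t x => Pt A t ⊆ x) ts π := by
  induction π with
  | nil => exact ⟨[], .nil⟩
  | cons x xs ih =>
    obtain ⟨t, ht⟩ := h x (List.mem_cons_self)
    obtain ⟨ts, hts⟩ := ih (fun y hy => h y (List.mem_cons_of_mem _ hy))
    exact ⟨t :: ts, .cons ht hts⟩

lemma exists_tree (A : HedgeAutomaton σ Q) :
    ∀ i, ∀ P ∈ minPostIter A i (∅ : Set (Set Q)), ∃ t : UTree σ, Pt A t ⊆ P := by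
  intro i
  induction i with
  | zero => exact fun P hP => absurd hP.1 (Set.notMem_empty P)
  | succ n ih =>
    intro P hP
    rcases hP.1 with ⟨a, π, hπ, rfl⟩ | hP'
    · obtain ⟨ts, hts⟩ := choose_trees A π (fun x hx => ih x (hπ x hx))
      refine ⟨UTree.node a ts, ?_⟩
      rw [Pt_node]
      apply postA_mono
      show List.Forall₂ (· ⊆ ·) (ts.map (Pt A)) π
      rw [List.forall₂_map_left_iff]
      exact hts
    · exact ih P hP'

end Aux

/-- Proposition 2: `A` is universal iff every macrostate
`P ∈ MinPost*(∅)` satisfies `P ∩ Q_f ≠ ∅`. -/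
theorem universal_iff_minPostStar {σ Q : Type} [Fintype σ] [Fintype Q]
    (A : HedgeAutomaton σ Q) (hfin : A.rules.Finite) (hreg : RegularHA A) :
    universal A ↔ ∀ P ∈ minPostStar A (∅ : Set (Set Q)), P ∩ A.final ≠ ∅ := by
  constructor
  · intro hu P hP
    obtain ⟨s, ⟨i, rfl⟩, hPi⟩ := hP
    obtain ⟨t, hsub⟩ := exists_tree A i P hPi
    obtain ⟨q, hqf, hq⟩ := hu t
    rw [← Set.nonempty_iff_ne_empty]
    exact ⟨q, hsub hq, hqf⟩
  · intro h t
    obtain ⟨i, P, hPi, hsub⟩ := exists_min A t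
    have hP : P ∈ minPostStar A (∅ : Set (Set Q)) := Set.mem_iUnion.2 ⟨i, hPi⟩
    obtain ⟨q, hqP, hqf⟩ := Set.nonempty_iff_ne_empty.2 (h P hP)
    exact ⟨q, hqf, hsub hqP⟩
end

section
/- Let A = (Q, Σ, Q_f, Δ) be a hedge automaton and wa a nonempty proper prefix of the linearization of some tree, with a ∈ Σ and w = w'a'[h'] for some a' ∈ Σ and hedge h'. Then A is wa-universal if and only if X_wa = ∅; moreover X_wa = {π_h ∈ E* | there exists a word v such that wa[h]āv is the linearization of a tree over Σ not accepted by A}. -/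
/-- `A` is `u`-universal: every tree whose linearization starts with `u` is accepted. -/
def uUniversal {σ Q : Type} (A : HedgeAutomaton σ Q) (u : List (σ ⊕ σ)) : Prop :=
  ∀ t : UTree σ, u <+: t.lin → accepted A t

/-- `E* = {π_h | h ∈ H(Σ)}`. -/
def Estar {σ Q : Type} (A : HedgeAutomaton σ Q) : Set (List (Set Q)) :=
  Set.range (pih A)

/-- `Pref(X) = {π ∈ E* | ∃ π' ∈ E* : ππ' ∈ X}`. -/
def PrefX {σ Q : Type} (A : HedgeAutomaton σ Q) (X : Set (List (Set Q))) :
    Set (List (Set Q)) :=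
  {π ∈ Estar A | ∃ π' ∈ Estar A, π ++ π' ∈ X}

/-- `XRel A w a X` holds iff `X = X_{wa}`: `X_a = {π ∈ E* | Post_a(π) ∩ Q_f = ∅}` and,
for `w = w'a'[h']`, `X_{wa} = {π ∈ E* | π_{h'}·Post_a(π) ∈ Pref(X_{w'a'})}`. -/
inductive XRel {σ Q : Type} (A : HedgeAutomaton σ Q) :
    List (σ ⊕ σ) → σ → Set (List (Set Q)) → Prop
  | base (a : σ) : XRel A [] a {π ∈ Estar A | postA A a π ∩ A.final = ∅}
  | step {w' : List (σ ⊕ σ)} {a' : σ} {X' : Set (List (Set Q))}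
      (a : σ) (h' : List (UTree σ)) :
      XRel A w' a' X' →
      XRel A (w' ++ Sum.inl a' :: linH h') a
        {π ∈ Estar A | pih A h' ++ [postA A a π] ∈ PrefX A X'}


section TreeLemmas
variable {σ : Type}

theorem lin_node (a : σ) (ts : List (UTree σ)) :
    (UTree.node a ts).lin = Sum.inl a :: (linH ts ++ [Sum.inr a]) := by
  rw [UTree.lin]
  simp [linH, List.attach_map_val]

theorem linH_nil : linH ([] : List (UTree σ)) = [] := rfl

theorem linH_cons (t : UTree σ) (h : List (UTree σ)) : linH (t :: h) = t.lin ++ linH h := by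
  simp [linH]

theorem linH_append (h1 h2 : List (UTree σ)) : linH (h1 ++ h2) = linH h1 ++ linH h2 := by
  simp [linH]

theorem lin_length_pos (t : UTree σ) : 0 < t.lin.length := by
  obtain ⟨a, ts⟩ := t; simp [lin_node]
theorem uniq_aux : ∀ n : ℕ,
    (∀ (t s : UTree σ) (x y : List (σ ⊕ σ)), (t.lin ++ x).length ≤ n →
       t.lin ++ x = s.lin ++ y → t = s ∧ x = y) ∧
    (∀ (G ts : List (UTree σ)) (z rest : List (σ ⊕ σ)) (c : σ),
       (linH G ++ z).length ≤ n →
       linH G ++ z = linH ts ++ Sum.inr c :: rest →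
       ∃ k, ts = G ++ k ∧ z = linH k ++ Sum.inr c :: rest) := by
  intro n
  induction n using Nat.strong_induction_on with
  | _ n IH =>
  have T : ∀ (t s : UTree σ) (x y : List (σ ⊕ σ)), (t.lin ++ x).length ≤ n →
      t.lin ++ x = s.lin ++ y → t = s ∧ x = y := by
    rintro ⟨b, ts₂⟩ ⟨c, ss₂⟩ x y hlen heq
    rw [lin_node, lin_node] at heq
    simp only [List.cons_append, List.append_assoc, List.singleton_append] at heq
    injection heq with h1 h2
    injection h1 with hbc
    subst hbc
    rw [lin_node] at hlen
    simp only [List.length_append, List.length_cons] at hlen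
    have hm : (linH ts₂ ++ Sum.inr b :: x).length < n := by
      simp only [List.length_append, List.length_cons]; omega
    obtain ⟨k, hk1, hk2⟩ := (IH _ hm).2 ts₂ ss₂ (Sum.inr b :: x) y b le_rfl h2
    cases k with
    | nil =>
      simp only [linH_nil, List.nil_append] at hk2
      injection hk2 with h3 h4
      simp only [List.append_nil] at hk1
      exact ⟨by rw [hk1], h4⟩
    | cons k0 ks =>
      exfalso
      obtain ⟨d, ds⟩ := k0
      rw [linH_cons, lin_node] at hk2
      simp only [List.cons_append] at hk2
      injection hk2 with h3 _
      cases h3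
  refine ⟨T, ?_⟩
  intro G
  induction G with
  | nil =>
    intro ts z rest c _ heq
    exact ⟨ts, rfl, by simpa [linH_nil] using heq⟩
  | cons g G' IHG =>
    intro ts z rest c hlen heq
    cases ts with
    | nil =>
      exfalso
      obtain ⟨d, ds⟩ := g
      rw [linH_cons, lin_node, linH_nil] at heq
      simp only [List.cons_append, List.nil_append] at heq
      injection heq with h3 _
      cases h3
    | cons s ts' =>
      rw [linH_cons, linH_cons, List.append_assoc, List.append_assoc] at heq
      rw [linH_cons, List.append_assoc] at hlen
      obtain ⟨rfl, h2⟩ := T g s _ _ hlen heq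
      have hlen2 : (linH G' ++ z).length ≤ n := by
        simp only [List.length_append] at hlen ⊢
        have := lin_length_pos g
        omega
      obtain ⟨k, hk1, hk2⟩ := IHG ts' z rest c hlen2 h2
      exact ⟨k, by rw [hk1, List.cons_append], hk2⟩

theorem lin_uniq {t s : UTree σ} {x y : List (σ ⊕ σ)} (h : t.lin ++ x = s.lin ++ y) :
    t = s ∧ x = y :=
  (uniq_aux _).1 t s x y le_rfl h

theorem hedge_split {G ts : List (UTree σ)} {z rest : List (σ ⊕ σ)} {c : σ}
    (h : linH G ++ z = linH ts ++ Sum.inr c :: rest) :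
    ∃ k, ts = G ++ k ∧ z = linH k ++ Sum.inr c :: rest :=
  (uniq_aux _).2 G ts z rest c le_rfl h
theorem decomp_aux : ∀ n : ℕ,
    (∀ (t : UTree σ) (u : List (σ ⊕ σ)) (a : σ), t.lin.length ≤ n →
      u ++ [Sum.inl a] <+: t.lin →
      ∃ ts rest, t.lin = u ++ [Sum.inl a] ++ linH ts ++ [Sum.inr a] ++ rest) ∧
    (∀ (h : List (UTree σ)) (u : List (σ ⊕ σ)) (a : σ), (linH h).length + 1 ≤ n →
      u ++ [Sum.inl a] <+: linH h →
      ∃ ts rest, linH h = u ++ [Sum.inl a] ++ linH ts ++ [Sum.inr a] ++ rest) := by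
  intro n
  induction n using Nat.strong_induction_on with
  | _ n IH =>
  constructor
  · rintro ⟨b, cs⟩ u a hlen hpre
    rw [lin_node] at hlen
    simp only [List.length_cons, List.length_append, List.length_singleton] at hlen
    cases u with
    | nil =>
      obtain ⟨r, hr⟩ := hpre
      rw [lin_node] at hr
      simp only [List.nil_append, List.singleton_append] at hr
      injection hr with h1 _
      injection h1 with hab
      subst hab
      exact ⟨cs, [], by simp [lin_node]⟩
    | cons e u' =>
      obtain ⟨r, hr⟩ := hpre
      rw [lin_node] at hr
      simp only [List.cons_append] at hr
      injection hr with h1 h2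
      subst h1
      have hpre2 : u' ++ [Sum.inl a] <+: linH cs ++ [Sum.inr b] := ⟨r, h2⟩
      have hlen2 := hpre2.length_le
      simp only [List.length_append, List.length_singleton] at hlen2
      rcases le_or_gt (u'.length + 1) (linH cs).length with hle | hgt
      · have hpre3 : u' ++ [Sum.inl a] <+: linH cs :=
          List.prefix_of_prefix_length_le hpre2 (List.prefix_append _ _)
            (by simp only [List.length_append, List.length_singleton]; omega)
        obtain ⟨ts, rest, hts⟩ := (IH ((linH cs).length + 1) (by omega)).2 cs u' a le_rfl hpre3
        refine ⟨ts, rest ++ [Sum.inr b], ?_⟩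
        rw [lin_node, hts]
        simp
      · have hleq : (u' ++ [Sum.inl a]).length = (linH cs ++ [Sum.inr b]).length := by
          simp only [List.length_append, List.length_singleton]; omega
        have heq := hpre2.eq_of_length hleq
        have hcontra := (List.append_inj' heq (by simp)).2
        simp at hcontra
  · intro h u a hlen hpre
    cases h with
    | nil =>
      exfalso
      have := hpre.length_le
      simp only [linH_nil, List.length_nil, List.length_append, List.length_singleton] at this
      omega
    | cons c h' =>
      rw [linH_cons] at hpre ⊢
      rw [linH_cons] at hlen
      simp only [List.length_append] at hlen
      have hc2 := lin_length_pos c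
      rcases le_or_gt (u.length + 1) c.lin.length with hle | hgt
      · have hpre2 : u ++ [Sum.inl a] <+: c.lin :=
          List.prefix_of_prefix_length_le hpre (List.prefix_append _ _)
            (by simp only [List.length_append, List.length_singleton]; omega)
        obtain ⟨ts, rest, hts⟩ := (IH c.lin.length (by omega)).1 c u a le_rfl hpre2
        refine ⟨ts, rest ++ linH h', ?_⟩
        rw [hts]; simp
      · have h1 : c.lin <+: u ++ [Sum.inl a] :=
          List.prefix_of_prefix_length_le (List.prefix_append _ _) hpre
            (by simp only [List.length_append, List.length_singleton]; omega)
        have h2 : c.lin <+: u :=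
          List.prefix_of_prefix_length_le h1 (List.prefix_append _ _) (by omega)
        obtain ⟨u'', rfl⟩ := h2
        have hpre3 : u'' ++ [Sum.inl a] <+: linH h' := by
          rw [List.append_assoc] at hpre
          exact (List.prefix_append_right_inj c.lin).mp hpre
        obtain ⟨ts, rest, hts⟩ := (IH ((linH h').length + 1) (by omega)).2 h' u'' a le_rfl hpre3
        refine ⟨ts, rest, ?_⟩
        rw [hts]; simp

theorem decomp_tree {t : UTree σ} {u : List (σ ⊕ σ)} {a : σ}
    (h : u ++ [Sum.inl a] <+: t.lin) :
    ∃ ts rest, t.lin = u ++ [Sum.inl a] ++ linH ts ++ [Sum.inr a] ++ rest :=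
  (decomp_aux _).1 t u a le_rfl h

end TreeLemmas


section AutoLemmas
variable {σ Q : Type}

theorem mem_wordsOf_pih {A : HedgeAutomaton σ Q} {qs : List Q} {h : List (UTree σ)} :
    qs ∈ wordsOf (pih A h) ↔ qs.length = h.length ∧ ∀ p ∈ h.zip qs, HEval A p.1 p.2 := by
  unfold wordsOf pih
  rw [Set.mem_setOf_eq, List.forall₂_map_right_iff, List.forall₂_iff_zip]
  constructor
  · rintro ⟨hl, hz⟩
    refine ⟨hl, fun p hp => ?_⟩
    have hp' : p.swap ∈ (h.zip qs).map Prod.swap := List.mem_map_of_mem (f := Prod.swap) hp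
    rw [List.zip_swap] at hp'
    exact hz hp'
  · rintro ⟨hl, hz⟩
    refine ⟨hl, fun {q t} hqt => ?_⟩
    have hp' : (q, t).swap ∈ (qs.zip h).map Prod.swap := List.mem_map_of_mem (f := Prod.swap) hqt
    rw [List.zip_swap] at hp'
    exact hz _ hp'

theorem postA_pih (A : HedgeAutomaton σ Q) (a : σ) (h : List (UTree σ)) :
    postA A a (pih A h) = Pt A (UTree.node a h) := by
  ext q
  simp only [postA, Pt, Set.mem_setOf_eq]
  constructor
  · rintro ⟨L, hL, qs, hqsL, hqsw⟩
    rw [mem_wordsOf_pih] at hqsw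
    exact HEval.node hL hqsL hqsw.1 hqsw.2
  · intro hev
    cases hev with
    | node hL hqs hlen hz =>
      exact ⟨_, hL, _, hqs, mem_wordsOf_pih.mpr ⟨hlen, hz⟩⟩

theorem accepted_node_iff (A : HedgeAutomaton σ Q) (a : σ) (h : List (UTree σ)) :
    accepted A (UTree.node a h) ↔ (postA A a (pih A h) ∩ A.final).Nonempty := by
  rw [postA_pih]
  constructor
  · rintro ⟨q, hq, he⟩; exact ⟨q, he, hq⟩
  · rintro ⟨q, he, hq⟩; exact ⟨q, hq, he⟩

theorem pih_append (A : HedgeAutomaton σ Q) (h1 h2 : List (UTree σ)) :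
    pih A (h1 ++ h2) = pih A h1 ++ pih A h2 := by
  simp [pih]

end AutoLemmas


section Main
variable {σ Q : Type}

theorem mem_Estar {A : HedgeAutomaton σ Q} {π : List (Set Q)} :
    π ∈ Estar A ↔ ∃ h : List (UTree σ), pih A h = π := Iff.rfl

/-- The set of `π_h` for which a "bad" continuation tree exists. -/
def BadE (A : HedgeAutomaton σ Q) (w : List (σ ⊕ σ)) (a : σ) : Set (List (Set Q)) :=
  {π | ∃ h : List (UTree σ), π = pih A h ∧
        ∃ (v : List (σ ⊕ σ)) (t : UTree σ),
          t.lin = w ++ [Sum.inl a] ++ linH h ++ [Sum.inr a] ++ v ∧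
          ¬ accepted A t}

/-- The "for all representatives" variant of `BadE`. -/
def BadA (A : HedgeAutomaton σ Q) (w : List (σ ⊕ σ)) (a : σ) : Set (List (Set Q)) :=
  {π | π ∈ Estar A ∧ ∀ h : List (UTree σ), pih A h = π →
        ∃ (v : List (σ ⊕ σ)) (t : UTree σ),
          t.lin = w ++ [Sum.inl a] ++ linH h ++ [Sum.inr a] ++ v ∧
          ¬ accepted A t}

theorem xrel_char {A : HedgeAutomaton σ Q} {w : List (σ ⊕ σ)} {a : σ}
    {X : Set (List (Set Q))} (hX : XRel A w a X) :
    X ⊆ BadA A w a ∧ BadE A w a ⊆ X := by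
  induction hX with
  | base a =>
    constructor
    · rintro π ⟨hπE, hempty⟩
      refine ⟨hπE, fun h hh => ⟨[], UTree.node a h, by simp [lin_node], ?_⟩⟩
      rw [accepted_node_iff, hh, hempty]
      simp
    · rintro π ⟨h, rfl, v, t, hlin, hacc⟩
      obtain ⟨b, cs⟩ := t
      rw [lin_node] at hlin
      simp only [List.nil_append, List.append_assoc, List.singleton_append,
        List.cons_append] at hlin
      injection hlin with h1 h2
      injection h1 with hab
      subst hab
      obtain ⟨k, hk1, hk2⟩ := hedge_split h2.symm
      cases k with
      | cons k0 ks =>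
        exfalso
        obtain ⟨d, ds⟩ := k0
        rw [linH_cons, lin_node] at hk2
        simp only [List.cons_append] at hk2
        injection hk2 with h3 _
        cases h3
      | nil =>
        simp only [List.append_nil] at hk1
        subst hk1
        refine ⟨⟨cs, rfl⟩, ?_⟩
        rw [← Set.not_nonempty_iff_eq_empty]
        intro hne
        exact hacc ((accepted_node_iff A b cs).mpr hne)
  | step a h' hX' ih =>
    rename_i w' a' X'
    obtain ⟨ih1, ih2⟩ := ih
    constructor
    · rintro π ⟨hπE, hpref⟩
      refine ⟨hπE, fun h hh => ?_⟩
      rw [← hh, postA_pih] at hpref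
      simp only [PrefX, Set.mem_setOf_eq] at hpref
      obtain ⟨hmem, π'', hπ''E, hin⟩ := hpref
      obtain ⟨h'', rfl⟩ := hπ''E
      have hre : (pih A h' ++ [Pt A (UTree.node a h)]) ++ pih A h''
          = pih A (h' ++ UTree.node a h :: h'') := by simp [pih]
      rw [hre] at hin
      obtain ⟨_, hall⟩ := ih1 hin
      obtain ⟨v, t, hlin, hacc⟩ := hall _ rfl
      refine ⟨linH h'' ++ Sum.inr a' :: v, t, ?_, hacc⟩
      rw [hlin]
      simp [linH_append, linH_cons, lin_node, linH_nil]
    · rintro π ⟨h, rfl, v, t, hlin, hacc⟩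
      refine ⟨⟨h, rfl⟩, ?_⟩
      rw [postA_pih]
      have e1 : t.lin = (w' ++ [Sum.inl a']) ++ (linH (h' ++ [UTree.node a h]) ++ v) := by
        rw [hlin]
        simp [linH_append, linH_cons, lin_node, linH_nil]
      obtain ⟨ts, rest, hts⟩ := decomp_tree (u := w') (a := a') ⟨_, e1.symm⟩
      have e2 : (w' ++ [Sum.inl a']) ++ (linH (h' ++ [UTree.node a h]) ++ v)
          = (w' ++ [Sum.inl a']) ++ (linH ts ++ Sum.inr a' :: rest) := by
        rw [← e1, hts]; simp
      obtain ⟨k, hk1, hk2⟩ := hedge_split (List.append_cancel_left e2)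
      subst hk1
      have hre : pih A h' ++ [Pt A (UTree.node a h)] = pih A (h' ++ [UTree.node a h]) := by
        simp [pih]
      rw [hre]
      simp only [PrefX, Set.mem_setOf_eq]
      refine ⟨⟨_, rfl⟩, pih A k, ⟨k, rfl⟩, ?_⟩
      rw [← pih_append]
      exact ih2 ⟨(h' ++ [UTree.node a h]) ++ k, rfl, rest, t, hts, hacc⟩

end Main


/-- Proposition 4: for `wa` a nonempty proper prefix of some
linearization, with `w = w'a'[h']` nonempty, `A` is `wa`-universal iff `X_{wa} = ∅`;
moreover `X_{wa}` is exactly the set of `π_h ∈ E*` such that `wa[h]āv` is the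
linearization of some tree not accepted by `A`, for some word `v`. -/
theorem wa_universal_iff_Xwa {σ Q : Type} [Fintype σ] [Fintype Q]
    (A : HedgeAutomaton σ Q) (hfin : A.rules.Finite) (hreg : RegularHA A)
    (w : List (σ ⊕ σ)) (a : σ) (X : Set (List (Set Q)))
    (hw : w ≠ []) (hX : XRel A w a X)
    (hpre : ProperPrefix (w ++ [Sum.inl a])) :
    (uUniversal A (w ++ [Sum.inl a]) ↔ X = ∅) ∧
    X = {π | ∃ h : List (UTree σ), π = pih A h ∧
          ∃ (v : List (σ ⊕ σ)) (t : UTree σ),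
            t.lin = w ++ [Sum.inl a] ++ linH h ++ [Sum.inr a] ++ v ∧
            ¬ accepted A t} := by
  obtain ⟨hsub1, hsub2⟩ := xrel_char hX
  have hXeq : X = {π | ∃ h : List (UTree σ), π = pih A h ∧
      ∃ (v : List (σ ⊕ σ)) (t : UTree σ),
        t.lin = w ++ [Sum.inl a] ++ linH h ++ [Sum.inr a] ++ v ∧
        ¬ accepted A t} := by
    apply Set.Subset.antisymm
    · intro π hπ
      obtain ⟨hπE, hall⟩ := hsub1 hπ
      obtain ⟨h, rfl⟩ := hπE
      obtain ⟨v, t, h1, h2⟩ := hall h rfl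
      exact ⟨h, rfl, v, t, h1, h2⟩
    · exact hsub2
  refine ⟨?_, hXeq⟩
  constructor
  · intro huniv
    rw [hXeq]
    ext π
    simp only [Set.mem_setOf_eq, Set.mem_empty_iff_false, iff_false]
    rintro ⟨h, rfl, v, t, hlin, hacc⟩
    exact hacc (huniv t ⟨linH h ++ [Sum.inr a] ++ v, by rw [hlin]; simp⟩)
  · intro hempty t hpret
    obtain ⟨ts, rest, hts⟩ := decomp_tree (u := w) (a := a) hpret
    by_contra hacc
    have hmem : pih A ts ∈ X := hsub2 ⟨ts, rfl, rest, t, hts, hacc⟩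
    rw [hempty] at hmem
    exact hmem
end
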